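/- In the square annulus X, regarded as a topological subspace of ℝ², the path a going below the obstruction, a(t) = (min(2t,1), max(2t−1,0)), and the path a′ going above the obstruction, a′(t) = (max(2t−1,0), min(2t,1)), both from (0,0) to (1,1), are not homotopic with fixed endpoints in X (as ordinary paths, with no monotonicity constraint on the homotopy). (The final claim of 2.1: a path below the obstruction and a path above it are not even 2-equivalent in the underlying topological space.) -/

import Mathlib

open Set

/-- The obstruction: the open square `(1/3, 2/3) × (1/3, 2/3)`. -/
def Qobs : Set (ℝ × ℝ) := Ioo (1/3 : ℝ) (2/3) ×ˢ Ioo (1/3 : ℝ) (2/3)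

/-- The square annulus `X = [0,1]² \ Q`, as a subset of `ℝ²`. -/
def Xann : Set (ℝ × ℝ) := (Icc (0:ℝ) 1 ×ˢ Icc (0:ℝ) 1) \ Qobs

/-- The path from `(0,0)` to `(1,1)` going below the obstruction. -/
noncomputable def belowPath (t : ℝ) : ℝ × ℝ := (min (2 * t) 1, max (2 * t - 1) 0)

/-- The path from `(0,0)` to `(1,1)` going above the obstruction. -/
noncomputable def abovePath (t : ℝ) : ℝ × ℝ := (max (2 * t - 1) 0, min (2 * t) 1)


open Complex Real

noncomputable def cc (p : ℝ × ℝ) : ℂ := (p.1 - 2⁻¹ : ℝ) + (p.2 - 2⁻¹ : ℝ) * Complex.I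

@[simp] lemma cc_re (p : ℝ × ℝ) : (cc p).re = p.1 - 2⁻¹ := by simp [cc]
@[simp] lemma cc_im (p : ℝ × ℝ) : (cc p).im = p.2 - 2⁻¹ := by simp [cc]

lemma ratio_re {a b : ℂ} (ha : ‖a‖ = 1) (hb : ‖b‖ = 1)
    (h : dist a b ≤ 1) : (1:ℝ)/2 ≤ (a / b).re := by
  have hb0 : b ≠ 0 := by intro h0; rw [h0] at hb; simp at hb
  have hna : Complex.normSq a = 1 := by
    rw [← Complex.sq_norm, ha]; norm_num
  have hnb : Complex.normSq b = 1 := by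
    rw [← Complex.sq_norm, hb]; norm_num
  have hd : Complex.normSq (a - b) ≤ 1 := by
    have := Complex.sq_norm (a - b)
    have hab : ‖a - b‖ ≤ 1 := by rwa [Complex.dist_eq] at h
    nlinarith [norm_nonneg (a - b)]
  have hdiv : a / b = a * (starRingEnd ℂ) b := by
    rw [div_eq_mul_inv, Complex.inv_def, hnb]
    simp
  rw [hdiv]
  simp only [Complex.mul_re, Complex.conj_re, Complex.conj_im]
  simp only [Complex.normSq_apply] at hna hnb hd
  simp only [Complex.sub_re, Complex.sub_im] at hd
  nlinarith

lemma exp_arg_unit {z : ℂ} (hz : ‖z‖ = 1) :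
    Complex.exp (z.arg * Complex.I) = z := by
  have := Complex.norm_mul_exp_arg_mul_I z
  rwa [hz, Complex.ofReal_one, one_mul] at this

lemma argExpI {θ : ℝ} (h : |θ| < π) :
    (Complex.exp (θ * Complex.I)).arg = θ := by
  rw [Complex.exp_mul_I]
  exact Complex.arg_cos_add_sin_mul_I ⟨(abs_lt.1 h).1, (abs_lt.1 h).2.le⟩

lemma arg_of_eq {θ r : ℝ} (hr : 0 < r) (hθ : θ ∈ Set.Ioc (-π) π) {z : ℂ}
    (hz : z = (r : ℝ) * (Real.cos θ + Real.sin θ * Complex.I)) : z.arg = θ := by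
  rw [hz]
  rw [show ((r:ℝ) * (Real.cos θ + Real.sin θ * Complex.I) : ℂ)
      = (r:ℝ) * (Complex.cos θ + Complex.sin θ * Complex.I) by
    rw [← Complex.ofReal_cos, ← Complex.ofReal_sin]]
  rw [Complex.arg_real_mul _ hr]
  exact Complex.arg_cos_add_sin_mul_I hθ

lemma exp_sum_arg (g : ℕ → ℂ) : ∀ n : ℕ, (∀ k ≤ n, ‖g k‖ = 1) →
    Complex.exp ((∑ k ∈ Finset.range n, ((g (k+1)) / (g k)).arg : ℝ) * Complex.I)
      = g n / g 0 := by
  intro n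
  induction n with
  | zero =>
    intro hg
    have h0 : g 0 ≠ 0 := by
      intro h; have := hg 0 le_rfl; rw [h] at this; simp at this
    simp [div_self h0]
  | succ n ih =>
    intro hg
    have hg' : ∀ k ≤ n, ‖g k‖ = 1 := fun k hk => hg k (hk.trans n.le_succ)
    have hn : g n ≠ 0 := by
      intro h; have := hg' n le_rfl; rw [h] at this; simp at this
    have hn1 : g (n+1) ≠ 0 := by
      intro h; have := hg (n+1) le_rfl; rw [h] at this; simp at this
    have h0 : g 0 ≠ 0 := by
      intro h; have := hg 0 (Nat.zero_le _); rw [h] at this; simp at this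
    have hr : ‖g (n+1) / g n‖ = 1 := by
      rw [norm_div, hg (n+1) le_rfl, hg' n le_rfl]; norm_num
    rw [Finset.sum_range_succ, Complex.ofReal_add, add_mul, Complex.exp_add, ih hg',
      exp_arg_unit hr]
    field_simp

lemma int_valued_eq {g : ℝ → ℝ} (hg : ContinuousOn g (Icc 0 1)) (h0 : g 0 = 0)
    (hint : ∀ s ∈ Icc (0:ℝ) 1, ∃ k : ℤ, g s = 2 * π * k) : g 1 = 0 := by
  by_contra hne
  obtain ⟨k, hk⟩ := hint 1 (by norm_num)
  have hπ := Real.pi_pos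
  -- g 1 = 2πk with k ≠ 0
  have hk0 : k ≠ 0 := by
    intro h; rw [h] at hk; simp at hk; exact hne hk
  rcases lt_or_gt_of_ne hk0 with hneg | hpos
  · -- k ≤ -1, so g 1 ≤ -2π < -π < 0 = g 0 ; find s with g s = -π
    have hk1 : (k:ℝ) ≤ -1 := by exact_mod_cast (show k ≤ -1 by omega)
    have hg1 : g 1 ≤ -(2*π) := by rw [hk]; nlinarith
    have : (-π) ∈ Icc (g 1) (g 0) := by constructor <;> [linarith; linarith]
    obtain ⟨s, hs, hgs⟩ := intermediate_value_Icc' (by norm_num : (0:ℝ) ≤ 1) hg this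
    obtain ⟨m, hm⟩ := hint s (Icc_subset_Icc (le_refl _) (le_refl _) hs)
    rw [hgs] at hm
    have : (2*m : ℝ) = -1 := by nlinarith
    have : (2*m : ℤ) = -1 := by exact_mod_cast this
    omega
  · have hk1 : (1:ℝ) ≤ (k:ℝ) := by exact_mod_cast hpos
    have hg1 : 2*π ≤ g 1 := by rw [hk]; nlinarith
    have : π ∈ Icc (g 0) (g 1) := by constructor <;> [linarith; linarith]
    obtain ⟨s, hs, hgs⟩ := intermediate_value_Icc (by norm_num : (0:ℝ) ≤ 1) hg this
    obtain ⟨m, hm⟩ := hint s hs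
    rw [hgs] at hm
    have : (2*m : ℝ) = 1 := by nlinarith
    have : (2*m : ℤ) = 1 := by exact_mod_cast this
    omega

lemma sqrt2_mul_self : Real.sqrt 2 * Real.sqrt 2 = 2 :=
  Real.mul_self_sqrt (by norm_num)

lemma sqrt2_pos : 0 < Real.sqrt 2 / 2 := by positivity

lemma cos_3pi4 : Real.cos (3*π/4) = -(Real.sqrt 2 / 2) := by
  rw [show (3*π/4 : ℝ) = π - π/4 by ring, Real.cos_pi_sub, Real.cos_pi_div_four]

lemma sin_3pi4 : Real.sin (3*π/4) = Real.sqrt 2 / 2 := by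
  rw [show (3*π/4 : ℝ) = π - π/4 by ring, Real.sin_pi_sub, Real.sin_pi_div_four]

lemma argV1 : ((2⁻¹ : ℝ) + (2⁻¹ : ℝ) * Complex.I).arg = π/4 := by
  have hπ := Real.pi_pos
  apply arg_of_eq (r := Real.sqrt 2 / 2) sqrt2_pos ⟨by linarith, by linarith⟩
  rw [Real.cos_pi_div_four, Real.sin_pi_div_four]
  apply Complex.ext <;> simp <;> nlinarith [sqrt2_mul_self]

lemma argV2 : ((-2⁻¹ : ℝ) + (-2⁻¹ : ℝ) * Complex.I).arg = -(3*π/4) := by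
  have hπ := Real.pi_pos
  apply arg_of_eq (r := Real.sqrt 2 / 2) sqrt2_pos ⟨by linarith, by linarith⟩
  rw [Real.cos_neg, Real.sin_neg, cos_3pi4, sin_3pi4]
  apply Complex.ext <;> simp <;> nlinarith [sqrt2_mul_self]

lemma argV3 : ((-2⁻¹ : ℝ) + (2⁻¹ : ℝ) * Complex.I).arg = 3*π/4 := by
  have hπ := Real.pi_pos
  apply arg_of_eq (r := Real.sqrt 2 / 2) sqrt2_pos ⟨by linarith, by linarith⟩
  rw [cos_3pi4, sin_3pi4]
  apply Complex.ext <;> simp <;> nlinarith [sqrt2_mul_self]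

lemma argV4 : ((2⁻¹ : ℝ) + (-2⁻¹ : ℝ) * Complex.I).arg = -(π/4) := by
  have hπ := Real.pi_pos
  apply arg_of_eq (r := Real.sqrt 2 / 2) sqrt2_pos ⟨by linarith, by linarith⟩
  rw [Real.cos_neg, Real.sin_neg, Real.cos_pi_div_four, Real.sin_pi_div_four]
  apply Complex.ext <;> simp <;> nlinarith [sqrt2_mul_self]


noncomputable def psiB (t : ℝ) : ℝ := (cc (belowPath t)).arg
noncomputable def psiA (t : ℝ) : ℝ := (-Complex.I * cc (abovePath t)).arg + π/2

lemma belowPath_cont : Continuous belowPath := by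
  unfold belowPath; fun_prop

lemma abovePath_cont : Continuous abovePath := by
  unfold abovePath; fun_prop

lemma cc_cont : Continuous cc := by unfold cc; fun_prop

lemma ccBelow_slit (t : ℝ) : cc (belowPath t) ∈ Complex.slitPlane := by
  rw [Complex.mem_slitPlane_iff]
  by_cases h : 2*t - 1 ≤ 0
  · right
    simp only [cc_im, belowPath, max_eq_right h]
    norm_num
  · left
    push_neg at h
    simp only [cc_re, belowPath, min_eq_right (by linarith : (1:ℝ) ≤ 2*t)]
    norm_num

lemma ccAbove_slit (t : ℝ) : -Complex.I * cc (abovePath t) ∈ Complex.slitPlane := by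
  rw [Complex.mem_slitPlane_iff]
  have hre : (-Complex.I * cc (abovePath t)).re = (abovePath t).2 - 2⁻¹ := by
    simp [Complex.mul_re]
  have him : (-Complex.I * cc (abovePath t)).im = -((abovePath t).1 - 2⁻¹) := by
    simp [Complex.mul_im]
  by_cases h : 2*t - 1 ≤ 0
  · right
    rw [him]
    simp only [abovePath, max_eq_right h]
    norm_num
  · left
    push_neg at h
    rw [hre]
    simp only [abovePath, min_eq_right (by linarith : (1:ℝ) ≤ 2*t)]
    norm_num

lemma psiB_cont : Continuous psiB := by
  rw [continuous_iff_continuousAt]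
  intro t
  have h1 : ContinuousAt (fun t => cc (belowPath t)) t :=
    (cc_cont.comp belowPath_cont).continuousAt
  show ContinuousAt (Complex.arg ∘ (fun t => cc (belowPath t))) t
  exact ContinuousAt.comp (x := t) (Complex.continuousAt_arg (ccBelow_slit t)) h1

lemma psiA_cont : Continuous psiA := by
  apply Continuous.add _ continuous_const
  rw [continuous_iff_continuousAt]
  intro t
  have h1 : ContinuousAt (fun t => -Complex.I * cc (abovePath t)) t :=
    (continuous_const.mul (cc_cont.comp abovePath_cont)).continuousAt
  show ContinuousAt (Complex.arg ∘ (fun t => -Complex.I * cc (abovePath t))) t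
  exact ContinuousAt.comp (x := t) (Complex.continuousAt_arg (ccAbove_slit t)) h1

lemma exp_arg_div {z : ℂ} (hz : z ≠ 0) :
    Complex.exp (z.arg * Complex.I) = z / (‖z‖ : ℝ) := by
  have h := Complex.norm_mul_exp_arg_mul_I z
  have ha : ((‖z‖ : ℝ) : ℂ) ≠ 0 := by
    simpa using norm_ne_zero_iff.mpr hz
  rw [eq_div_iff ha, mul_comm]
  exact h

lemma exp_pi_div_two_mul_I : Complex.exp ((π/2 : ℝ) * Complex.I) = Complex.I := by
  rw [Complex.exp_mul_I, ← Complex.ofReal_cos, ← Complex.ofReal_sin,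
    Real.cos_pi_div_two, Real.sin_pi_div_two]
  simp

lemma psiB_exp (t : ℝ) :
    Complex.exp ((psiB t : ℝ) * Complex.I)
      = cc (belowPath t) / (‖cc (belowPath t)‖ : ℝ) :=
  exp_arg_div (Complex.mem_slitPlane_iff_arg.mp (ccBelow_slit t)).2

lemma psiA_exp (t : ℝ) :
    Complex.exp ((psiA t : ℝ) * Complex.I)
      = cc (abovePath t) / (‖cc (abovePath t)‖ : ℝ) := by
  have hw : -Complex.I * cc (abovePath t) ≠ 0 :=
    (Complex.mem_slitPlane_iff_arg.mp (ccAbove_slit t)).2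
  have hz : cc (abovePath t) ≠ 0 := by
    intro h; rw [h] at hw; simp at hw
  rw [psiA, Complex.ofReal_add, add_mul, Complex.exp_add, exp_arg_div hw,
    _root_.exp_pi_div_two_mul_I]
  rw [norm_mul]
  simp only [norm_neg, Complex.norm_I, one_mul]
  have ha : ((‖cc (abovePath t)‖ : ℝ) : ℂ) ≠ 0 := by
    simpa using norm_ne_zero_iff.mpr hz
  field_simp
  ring_nf
  rw [Complex.I_sq]
  ring

lemma belowPath_zero : belowPath 0 = (0, 0) := by norm_num [belowPath]
lemma belowPath_one : belowPath 1 = (1, 1) := by norm_num [belowPath]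
lemma abovePath_zero : abovePath 0 = (0, 0) := by norm_num [abovePath]
lemma abovePath_one : abovePath 1 = (1, 1) := by norm_num [abovePath]

lemma cc_00 : cc (0, 0) = (-2⁻¹ : ℝ) + (-2⁻¹ : ℝ) * Complex.I := by
  norm_num [cc]
lemma cc_11 : cc (1, 1) = (2⁻¹ : ℝ) + (2⁻¹ : ℝ) * Complex.I := by
  norm_num [cc]

lemma psiB_zero : psiB 0 = -(3*π/4) := by
  rw [psiB, belowPath_zero, cc_00, argV2]
lemma psiB_one : psiB 1 = π/4 := by
  rw [psiB, belowPath_one, cc_11, argV1]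
lemma psiA_zero : psiA 0 = 3*π/4 + π/2 := by
  rw [psiA, abovePath_zero, cc_00]
  congr 1
  rw [show -Complex.I * ((-2⁻¹ : ℝ) + (-2⁻¹ : ℝ) * Complex.I)
      = (-2⁻¹ : ℝ) + (2⁻¹ : ℝ) * Complex.I by push_cast; ring_nf; rw [Complex.I_sq]; ring]
  exact argV3
lemma psiA_one : psiA 1 = -(π/4) + π/2 := by
  rw [psiA, abovePath_one, cc_11]
  congr 1
  rw [show -Complex.I * ((2⁻¹ : ℝ) + (2⁻¹ : ℝ) * Complex.I)
      = (2⁻¹ : ℝ) + (-2⁻¹ : ℝ) * Complex.I by push_cast; ring_nf; rw [Complex.I_sq]; ring]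
  exact argV4

/-- In the square annulus, regarded as a topological subspace of `ℝ²`, the path below the
obstruction and the path above it are not homotopic with fixed endpoints (as ordinary
paths, with no monotonicity constraint on the homotopy). (Final claim of 2.1.) -/
theorem belowPath_not_homotopic_abovePath :
    ¬ ∃ H : ℝ → ℝ → ℝ × ℝ,
      ContinuousOn (fun p : ℝ × ℝ => H p.1 p.2) (Icc 0 1 ×ˢ Icc 0 1) ∧
      (∀ t ∈ Icc (0:ℝ) 1, ∀ s ∈ Icc (0:ℝ) 1, H t s ∈ Xann) ∧
      (∀ t ∈ Icc (0:ℝ) 1, H t 0 = belowPath t) ∧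
      (∀ t ∈ Icc (0:ℝ) 1, H t 1 = abovePath t) ∧
      (∀ s ∈ Icc (0:ℝ) 1, H 0 s = (0, 0)) ∧
      (∀ s ∈ Icc (0:ℝ) 1, H 1 s = (1, 1)) := by
  rintro ⟨H, hcont, hmem, hbot, htop, hleft, hright⟩
  have hπ := Real.pi_pos
  set sq : Set (ℝ × ℝ) := Icc (0:ℝ) 1 ×ˢ Icc (0:ℝ) 1 with hsq_def
  have hsqc : IsCompact sq := isCompact_Icc.prod isCompact_Icc
  -- the recentered map is nonvanishing on the square
  have hne : ∀ p ∈ sq, cc (H p.1 p.2) ≠ 0 := by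
    intro p hp hz
    have hmem' : H p.1 p.2 ∈ Xann := hmem p.1 hp.1 p.2 hp.2
    have hre := congrArg Complex.re hz
    have him := congrArg Complex.im hz
    rw [cc_re] at hre; rw [cc_im] at him
    simp only [Complex.zero_re, Complex.zero_im] at hre him
    have hval : H p.1 p.2 = ((2⁻¹ : ℝ), (2⁻¹ : ℝ)) :=
      Prod.ext (by linarith) (by linarith)
    rw [Xann, Set.mem_diff] at hmem'
    exact hmem'.2 (by rw [hval]; constructor <;> constructor <;> norm_num)
  -- the normalized map
  set Φ : ℝ × ℝ → ℂ :=
    fun p => cc (H p.1 p.2) / (‖cc (H p.1 p.2)‖ : ℝ) with hΦ_def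
  have hΦabs : ∀ p ∈ sq, ‖Φ p‖ = 1 := by
    intro p hp
    simp only [hΦ_def, norm_div, Complex.norm_real, norm_norm]
    exact div_self (norm_ne_zero_iff.mpr (hne p hp))
  have hΦne : ∀ p ∈ sq, Φ p ≠ 0 := by
    intro p hp h
    have := hΦabs p hp
    rw [h] at this; simp at this
  have hccH : ContinuousOn (fun p : ℝ × ℝ => cc (H p.1 p.2)) sq :=
    cc_cont.comp_continuousOn hcont
  have hΦcont : ContinuousOn Φ sq := by
    apply hccH.div
    · exact Complex.continuous_ofReal.comp_continuousOn
        (continuous_norm.comp_continuousOn hccH)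
    · intro p hp
      simpa using norm_ne_zero_iff.mpr (hne p hp)
  -- uniform continuity
  have hUC := hsqc.uniformContinuousOn_of_continuous hΦcont
  rw [Metric.uniformContinuousOn_iff] at hUC
  obtain ⟨δF, hδF, hF⟩ := hUC 1 one_pos
  have hUB := (isCompact_Icc : IsCompact (Icc (0:ℝ) 1)).uniformContinuousOn_of_continuous
    psiB_cont.continuousOn
  rw [Metric.uniformContinuousOn_iff] at hUB
  obtain ⟨δb, hδb, hB⟩ := hUB π hπ
  have hUA := (isCompact_Icc : IsCompact (Icc (0:ℝ) 1)).uniformContinuousOn_of_continuous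
    psiA_cont.continuousOn
  rw [Metric.uniformContinuousOn_iff] at hUA
  obtain ⟨δa, hδa, hA⟩ := hUA π hπ
  -- choose the mesh
  obtain ⟨n, hn⟩ := exists_nat_gt (max (1/δF) (max (1/δb) (1/δa)))
  have hnpos : (0:ℝ) < n := lt_trans (lt_of_lt_of_le (by positivity) (le_max_left (1/δF) _)) hn
  have hstepF : 1/(n:ℝ) < δF :=
    (one_div_lt hnpos hδF).mpr (lt_of_le_of_lt (le_max_left _ _) hn)
  have hstepB : 1/(n:ℝ) < δb :=
    (one_div_lt hnpos hδb).mpr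
      (lt_of_le_of_lt ((le_max_left _ _).trans (le_max_right _ _)) hn)
  have hstepA : 1/(n:ℝ) < δa :=
    (one_div_lt hnpos hδa).mpr
      (lt_of_le_of_lt ((le_max_right _ _).trans (le_max_right _ _)) hn)
  have hxmem : ∀ k : ℕ, k ≤ n → (k:ℝ)/n ∈ Icc (0:ℝ) 1 := by
    intro k hk
    constructor
    · positivity
    · rw [div_le_one hnpos]; exact_mod_cast hk
  have hxdist : ∀ k : ℕ, dist (((k:ℝ)+1)/n) ((k:ℝ)/n) = 1/n := by
    intro k
    rw [Real.dist_eq, show ((k:ℝ)+1)/n - (k:ℝ)/n = 1/n by field_simp; ring]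
    exact abs_of_pos (by positivity)
  -- the grid points of the homotopy
  set G : ℝ → ℕ → ℂ := fun s k => Φ ((k:ℝ)/n, s) with hG_def
  have hGmem : ∀ s ∈ Icc (0:ℝ) 1, ∀ k ≤ n, ((k:ℝ)/n, s) ∈ sq := by
    intro s hs k hk
    exact ⟨hxmem k hk, hs⟩
  have hGabs : ∀ s ∈ Icc (0:ℝ) 1, ∀ k ≤ n, ‖G s k‖ = 1 := by
    intro s hs k hk
    exact hΦabs _ (hGmem s hs k hk)
  have hGne : ∀ s ∈ Icc (0:ℝ) 1, ∀ k ≤ n, G s k ≠ 0 := by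
    intro s hs k hk
    exact hΦne _ (hGmem s hs k hk)
  have hGdist : ∀ s ∈ Icc (0:ℝ) 1, ∀ k < n, dist (G s (k+1)) (G s k) ≤ 1 := by
    intro s hs k hk
    apply le_of_lt
    have h1 := hF _ (hGmem s hs (k+1) hk) _ (hGmem s hs k hk.le) ?_
    · exact_mod_cast h1
    · rw [Prod.dist_eq]
      simp only [dist_self]
      push_cast
      rw [max_eq_left dist_nonneg, hxdist k]
      exact hstepF
  -- the winding sum
  set W : ℝ → ℝ := fun s => ∑ k ∈ Finset.range n, ((G s (k+1)) / (G s k)).arg with hW_def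
  -- (ii) exponential of the winding sum
  have hWexp : ∀ s ∈ Icc (0:ℝ) 1,
      Complex.exp ((W s : ℝ) * Complex.I) = G s n / G s 0 := by
    intro s hs
    exact exp_sum_arg (G s) n (fun k hk => hGabs s hs k hk)
  -- endpoints of the grid are constant in s
  have hG0 : ∀ s ∈ Icc (0:ℝ) 1, G s 0 = G 0 0 := by
    intro s hs
    simp only [hG_def, hΦ_def, Nat.cast_zero, zero_div]
    rw [hleft s hs, hleft 0 (by norm_num)]
  have hGn : ∀ s ∈ Icc (0:ℝ) 1, G s n = G 0 n := by
    intro s hs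
    simp only [hG_def, hΦ_def]
    rw [div_self hnpos.ne', hright s hs, hright 0 (by norm_num)]
  -- (v) rigidity
  have hWcont : ContinuousOn W (Icc 0 1) := by
    apply continuousOn_finset_sum
    intro k hk
    rw [Finset.mem_range] at hk
    intro s hs
    have hcs : ∀ m : ℕ, m ≤ n → ContinuousWithinAt (fun s => G s m) (Icc 0 1) s := by
      intro m hm
      have hmap : MapsTo (fun s : ℝ => (((m:ℝ)/n), s)) (Icc 0 1) sq := by
        intro u hu; exact ⟨hxmem m hm, hu⟩
      have := (hΦcont.comp ((continuous_const.prodMk continuous_id).continuousOn) hmap)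
      exact this s hs
    have hratio : ContinuousWithinAt (fun s => G s (k+1) / G s k) (Icc 0 1) s :=
      (hcs (k+1) hk).div (hcs k hk.le) (hGne s hs k hk.le)
    show ContinuousWithinAt (Complex.arg ∘ fun s => G s (k+1) / G s k) (Icc 0 1) s
    apply ContinuousAt.comp_continuousWithinAt _ hratio
    apply Complex.continuousAt_arg
    rw [Complex.mem_slitPlane_iff]
    left
    have := ratio_re (hGabs s hs (k+1) hk) (hGabs s hs k hk.le) (hGdist s hs k hk)
    linarith
  have hWint : ∀ s ∈ Icc (0:ℝ) 1, ∃ m : ℤ, W s - W 0 = 2 * π * m := by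
    intro s hs
    have h0 : (0:ℝ) ∈ Icc (0:ℝ) 1 := by norm_num
    have he : Complex.exp ((W s - W 0 : ℝ) * Complex.I) = 1 := by
      rw [Complex.ofReal_sub, sub_mul, Complex.exp_sub, hWexp s hs, hWexp 0 h0,
        hG0 s hs, hGn s hs]
      rw [div_self]
      intro hzero
      rw [div_eq_zero_iff] at hzero
      rcases hzero with h | h
      · exact hGne 0 h0 n le_rfl h
      · exact hGne 0 h0 0 n.zero_le h
    rw [Complex.exp_eq_one_iff] at he
    obtain ⟨m, hm⟩ := he
    refine ⟨m, ?_⟩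
    have him := congrArg Complex.im hm
    simp only [Complex.ofReal_mul, Complex.mul_im, Complex.ofReal_re, Complex.I_im,
      Complex.ofReal_im, Complex.I_re] at him
    simp at him
    rw [him]; ring
  have hWconst : W 1 = W 0 := by
    have h := int_valued_eq (g := fun s => W s - W 0)
      (hWcont.sub continuousOn_const) (by simp)
      (fun s hs => hWint s hs)
    linarith
  -- (iii) value at s = 0
  have hval : ∀ (s₀ : ℝ), s₀ ∈ Icc (0:ℝ) 1 → ∀ ψ : ℝ → ℝ,
      (∀ x ∈ Icc (0:ℝ) 1, G s₀ 0 = G s₀ 0) → True := fun _ _ _ _ => trivial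
  have hW0 : W 0 = π := by
    have h0 : (0:ℝ) ∈ Icc (0:ℝ) 1 := by norm_num
    have hexp : ∀ m : ℕ, m ≤ n → G 0 m = Complex.exp ((psiB ((m:ℝ)/n) : ℝ) * Complex.I) := by
      intro m hm
      rw [hG_def]
      simp only [hΦ_def]
      rw [hbot _ (hxmem m hm), psiB_exp]
    have hterm : ∀ k < n, ((G 0 (k+1)) / (G 0 k)).arg
        = psiB (((k+1:ℕ) : ℝ)/n) - psiB ((k:ℝ)/n) := by
      intro k hk
      rw [hexp (k+1) hk, hexp k hk.le, ← Complex.exp_sub]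
      rw [show ((psiB (((k+1:ℕ):ℝ)/n) : ℝ) : ℂ) * Complex.I - ((psiB ((k:ℝ)/n) : ℝ) : ℂ) * Complex.I
          = ((psiB (((k+1:ℕ):ℝ)/n) - psiB ((k:ℝ)/n) : ℝ) : ℂ) * Complex.I by push_cast; ring]
      apply argExpI
      rw [← Real.dist_eq]
      exact hB _ (hxmem (k+1) hk) _ (hxmem k hk.le)
        (by push_cast; rw [hxdist]; exact hstepB)
    calc W 0 = ∑ k ∈ Finset.range n,
          (psiB (((k+1:ℕ):ℝ)/n) - psiB ((k:ℝ)/n)) := by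
          apply Finset.sum_congr rfl
          intro k hk
          rw [Finset.mem_range] at hk
          exact hterm k hk
      _ = psiB (((n:ℕ):ℝ)/n) - psiB (((0:ℕ):ℝ)/n) :=
          Finset.sum_range_sub (fun m : ℕ => psiB ((m:ℝ)/n)) n
      _ = π := by
          rw [div_self hnpos.ne']
          norm_num [psiB_one, psiB_zero]
          ring
  -- (iv) value at s = 1
  have hW1 : W 1 = -π := by
    have h1 : (1:ℝ) ∈ Icc (0:ℝ) 1 := by norm_num
    have hexp : ∀ m : ℕ, m ≤ n → G 1 m = Complex.exp ((psiA ((m:ℝ)/n) : ℝ) * Complex.I) := by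
      intro m hm
      rw [hG_def]
      simp only [hΦ_def]
      rw [htop _ (hxmem m hm), psiA_exp]
    have hterm : ∀ k < n, ((G 1 (k+1)) / (G 1 k)).arg
        = psiA (((k+1:ℕ) : ℝ)/n) - psiA ((k:ℝ)/n) := by
      intro k hk
      rw [hexp (k+1) hk, hexp k hk.le, ← Complex.exp_sub]
      rw [show ((psiA (((k+1:ℕ):ℝ)/n) : ℝ) : ℂ) * Complex.I - ((psiA ((k:ℝ)/n) : ℝ) : ℂ) * Complex.I
          = ((psiA (((k+1:ℕ):ℝ)/n) - psiA ((k:ℝ)/n) : ℝ) : ℂ) * Complex.I by push_cast; ring]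
      apply argExpI
      rw [← Real.dist_eq]
      exact hA _ (hxmem (k+1) hk) _ (hxmem k hk.le)
        (by push_cast; rw [hxdist]; exact hstepA)
    calc W 1 = ∑ k ∈ Finset.range n,
          (psiA (((k+1:ℕ):ℝ)/n) - psiA ((k:ℝ)/n)) := by
          apply Finset.sum_congr rfl
          intro k hk
          rw [Finset.mem_range] at hk
          exact hterm k hk
      _ = psiA (((n:ℕ):ℝ)/n) - psiA (((0:ℕ):ℝ)/n) :=
          Finset.sum_range_sub (fun m : ℕ => psiA ((m:ℝ)/n)) n
      _ = -π := by
          rw [div_self hnpos.ne']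
          norm_num [psiA_one, psiA_zero]
          ring
  rw [hW1, hW0] at hWconst
  linarith
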